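/- Let k > 0, t₀ ∈ ℝ, and θ₀ ∈ (0, π/2). Let θ be the solution of θ'(t) = k·sin(θ(t)) with θ(t₀) = θ₀. Then θ(t) ∈ (0, π) for t in the maximal interval of existence, and θ(t₁) = π/2 at the finite time t₁ = t₀ + (1/k)·ln(csc(θ₀) + cot(θ₀)) > t₀. -/

import Mathlib

open Real

/-- Instability for negative bare mass: a solution of `θ' = k sin θ` (`k = a²/(2|m|) > 0`)
starting at `θ₀ ∈ (0, π/2)` stays in `(0, π)` and reaches `π/2` at the finite time
`t₁ = t₀ + (1/k)·ln(csc θ₀ + cot θ₀)`. -/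
theorem theta_reaches_pi_div_two
    (k t₀ θ₀ t₁ : ℝ) (hk : 0 < k) (hθ₀ : θ₀ ∈ Set.Ioo 0 (π / 2))
    (ht₁ : t₁ = t₀ + (1 / k) * Real.log (1 / sin θ₀ + cos θ₀ / sin θ₀))
    (θ : ℝ → ℝ) (hinit : θ t₀ = θ₀)
    (hode : ∀ t ∈ Set.Icc t₀ t₁, HasDerivAt θ (k * sin (θ t)) t) :
    t₀ < t₁ ∧ (∀ t ∈ Set.Icc t₀ t₁, θ t ∈ Set.Ioo 0 π) ∧ θ t₁ = π / 2 := by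
  obtain ⟨h0, h2⟩ := hθ₀
  have hsin : 0 < sin θ₀ := sin_pos_of_pos_of_lt_pi h0 (h2.trans (by linarith [pi_pos]))
  have hcos : 0 < cos θ₀ := cos_pos_of_mem_Ioo ⟨by linarith [pi_pos], h2⟩
  -- c = tan (θ₀/2)
  set c : ℝ := tan (θ₀ / 2) with hc
  have hhalf0 : 0 < θ₀ / 2 := by linarith
  have hhalf2 : θ₀ / 2 < π / 4 := by linarith
  have hcoshalf : 0 < cos (θ₀ / 2) :=
    cos_pos_of_mem_Ioo ⟨by linarith [pi_pos], by linarith [pi_pos]⟩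
  have hsinhalf : 0 < sin (θ₀ / 2) := sin_pos_of_pos_of_lt_pi hhalf0 (by linarith [pi_pos])
  have hcpos : 0 < c := tan_pos_of_pos_of_lt_pi_div_two hhalf0 (by linarith [pi_pos])
  have hclt : c < 1 := by
    calc c < tan (π / 4) :=
          tan_lt_tan_of_lt_of_lt_pi_div_two (by linarith [pi_pos])
            (by linarith [pi_pos]) hhalf2
      _ = 1 := tan_pi_div_four
  -- key identity: 1/sin θ₀ + cos θ₀ / sin θ₀ = 1 / c
  have hsin2 : sin θ₀ = 2 * sin (θ₀ / 2) * cos (θ₀ / 2) := by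
    have h := Real.sin_two_mul (θ₀ / 2)
    rw [show 2 * (θ₀ / 2) = θ₀ by ring] at h; linarith
  have hcos2 : 1 + cos θ₀ = 2 * cos (θ₀ / 2) ^ 2 := by
    have h := Real.cos_two_mul (θ₀ / 2)
    rw [show 2 * (θ₀ / 2) = θ₀ by ring] at h; linarith
  have hid : 1 / sin θ₀ + cos θ₀ / sin θ₀ = 1 / c := by
    rw [hc, tan_eq_sin_div_cos, ← add_div, one_div_div, hsin2]
    field_simp
    nlinarith [hcos2]
  have hlogpos : 0 < Real.log (1 / c) := Real.log_pos (by
    rw [lt_div_iff₀ hcpos]; simpa using hclt)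
  have ht01 : t₀ < t₁ := by
    rw [ht₁, hid]; have := mul_pos (by positivity : (0:ℝ) < 1 / k) hlogpos; linarith
  -- explicit solution
  set u : ℝ → ℝ := fun t => Real.exp (k * (t - t₀)) * c with hu
  set φ : ℝ → ℝ := fun t => 2 * arctan (u t) with hφ
  have hupos : ∀ t, 0 < u t := fun t => mul_pos (exp_pos _) hcpos
  have hu' : ∀ t, HasDerivAt u (k * u t) t := by
    intro t
    have h1 : HasDerivAt (fun t => k * (t - t₀)) k t := by
      simpa using ((hasDerivAt_id t).sub_const t₀).const_mul k
    have := (h1.exp).mul_const c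
    simpa [hu, mul_comm, mul_assoc, mul_left_comm] using this
  have hsinφ : ∀ t, sin (φ t) = 2 * u t / (1 + u t ^ 2) := by
    intro t
    have h1 : (0:ℝ) < 1 + u t ^ 2 := by positivity
    rw [hφ]
    simp only [two_mul, sin_add, sin_arctan, cos_arctan]
    rw [div_mul_div_comm, div_mul_div_comm, one_mul, mul_one,
      Real.mul_self_sqrt h1.le]
    ring
  have hφ' : ∀ t, HasDerivAt φ (k * sin (φ t)) t := by
    intro t
    have h1 : (0:ℝ) < 1 + u t ^ 2 := by positivity
    have := ((Real.hasDerivAt_arctan (u t)).comp t (hu' t)).const_mul 2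
    refine HasDerivAt.congr_deriv this ?_
    rw [hsinφ t]
    field_simp
  -- uniqueness
  have huniq : Set.EqOn θ φ (Set.Icc t₀ t₁) := by
    have hlip : ∀ t : ℝ, LipschitzOnWith k.toNNReal (fun x => k * sin x)
        ((fun _ => Set.univ) t) := by
      intro t
      apply LipschitzWith.lipschitzOnWith
      apply LipschitzWith.of_dist_le_mul
      intro x y
      rw [Real.dist_eq, Real.dist_eq, ← mul_sub, abs_mul, abs_of_pos hk,
        Real.coe_toNNReal k hk.le]
      have hss : |sin x - sin y| ≤ |x - y| := by
        rw [Real.sin_sub_sin, abs_mul, abs_mul, abs_two]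
        calc 2 * |sin ((x - y) / 2)| * |cos ((x + y) / 2)|
            ≤ 2 * |(x - y) / 2| * 1 :=
              mul_le_mul
                (mul_le_mul_of_nonneg_left Real.abs_sin_le_abs (by norm_num))
                (abs_cos_le_one _) (abs_nonneg _) (by positivity)
          _ = |x - y| := by rw [abs_div, abs_two]; ring
      exact mul_le_mul_of_nonneg_left hss hk.le
    apply ODE_solution_unique_of_mem_Icc_right (v := fun _ x => k * sin x)
      (s := fun _ => Set.univ) (fun t _ => hlip t)
    · exact fun t ht => (hode t ht).continuousAt.continuousWithinAt
    · intro t ht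
      exact (hode t (Set.mem_Icc_of_Ico ht)).hasDerivWithinAt
    · exact fun t _ => trivial
    · exact fun t _ => (hφ' t).continuousAt.continuousWithinAt
    · exact fun t _ => (hφ' t).hasDerivWithinAt
    · exact fun t _ => trivial
    · rw [hinit, hφ]
      simp only [hu, sub_self, mul_zero, Real.exp_zero, one_mul, hc]
      rw [arctan_tan (by linarith [pi_pos]) (by linarith [pi_pos])]
      ring
  refine ⟨ht01, ?_, ?_⟩
  · intro t ht
    rw [huniq ht]
    show (2:ℝ) * arctan (u t) ∈ Set.Ioo 0 π
    constructor
    · have : arctan 0 < arctan (u t) := arctan_strictMono (hupos t)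
      rw [arctan_zero] at this
      linarith
    · have := arctan_lt_pi_div_two (u t)
      linarith
  · have hu1 : u t₁ = 1 := by
      rw [hu]
      have h : k * (t₁ - t₀) = Real.log (1 / c) := by
        rw [ht₁, hid]; field_simp; ring
      show Real.exp (k * (t₁ - t₀)) * c = 1
      rw [h, Real.exp_log (by positivity)]
      field_simp
    rw [huniq (Set.right_mem_Icc.2 ht01.le)]
    show (2:ℝ) * arctan (u t₁) = π / 2
    rw [hu1, arctan_one]
    ring
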